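/- Let c, c' > 0 be fixed real constants. There exist a constant d > 0 and a threshold r₀ > 0 such that for every real r ≥ r₀ the following holds. Let B : ℝ → ℝ be any function such that B(x) = 0 for all x ≤ r, and such that for every n > r there exist reals α₁, α₂, α₃ ≥ 0 with α₁ + α₂ + α₃ = 1, 1/3 ≤ α₁ ≤ 2/3, and α₃ ≤ α₂, satisfying B(n) ≤ c·√n + B(α₁·n + c'·√n) + B(α₂·n + c'·√n) + B(α₃·n + c'·√n). Then B(n) ≤ d·(n/√r − √n/3) for all n ≥ r/9. -/

import Mathlib

open Real

lemma weak_r_division_aux_sqrt_sum (u v : ℝ) (hu0 : 0 ≤ u) (hv0 : 0 ≤ v)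
    (hu : 1/3 ≤ u ^ 2) (hv : 1/6 ≤ v ^ 2) (hsum : 2/3 ≤ u ^ 2 + v ^ 2) :
    21/20 ≤ u + v := by
  have huv2 : (1:ℝ)/18 ≤ (u * v) ^ 2 := by nlinarith
  have huv : (4:ℝ)/17 ≤ u * v := by nlinarith [mul_nonneg hu0 hv0]
  nlinarith [add_nonneg hu0 hv0]

set_option maxHeartbeats 1600000 in
theorem weak_r_division_boundary_recurrence
    (c c' : ℝ) (hc : 0 < c) (hc' : 0 < c') :
    ∃ d > (0:ℝ), ∃ r₀ > (0:ℝ), ∀ r ≥ r₀, ∀ B : ℝ → ℝ,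
      (∀ x ≤ r, B x = 0) →
      (∀ n > r, ∃ α₁ α₂ α₃ : ℝ, 0 ≤ α₁ ∧ 0 ≤ α₂ ∧ 0 ≤ α₃ ∧
        α₁ + α₂ + α₃ = 1 ∧ 1/3 ≤ α₁ ∧ α₁ ≤ 2/3 ∧ α₃ ≤ α₂ ∧
        B n ≤ c * Real.sqrt n + B (α₁ * n + c' * Real.sqrt n) +
              B (α₂ * n + c' * Real.sqrt n) + B (α₃ * n + c' * Real.sqrt n)) →
      ∀ n ≥ r / 9, B n ≤ d * (n / Real.sqrt r - Real.sqrt n / 3) := by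
  refine ⟨120 * c, by positivity, max 1 (129600 * c' ^ 2), lt_max_of_lt_left one_pos, ?_⟩
  intro r hr B hB0 hrec
  have hr1 : (1:ℝ) ≤ r := le_trans (le_max_left _ _) hr
  have hrc' : 129600 * c' ^ 2 ≤ r := le_trans (le_max_right _ _) hr
  have hrpos : (0:ℝ) < r := by linarith
  have hsr : 0 < Real.sqrt r := Real.sqrt_pos.mpr hrpos
  have hsrc' : 360 * c' ≤ Real.sqrt r := by
    rw [Real.le_sqrt (by positivity) hrpos.le]
    nlinarith
  -- nonnegativity of the bounding function for n ≥ r/9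
  have hfpos : ∀ n : ℝ, r / 9 ≤ n →
      0 ≤ 120 * c * (n / Real.sqrt r - Real.sqrt n / 3) := by
    intro n hn
    have hn0 : (0:ℝ) ≤ n := le_trans (by positivity) hn
    have h1 : Real.sqrt r ≤ 3 * Real.sqrt n := by
      have h := Real.sqrt_le_sqrt (show r ≤ 3 ^ 2 * n by nlinarith)
      rwa [Real.sqrt_mul (by norm_num) n, Real.sqrt_sq (by norm_num)] at h
    have hsn : Real.sqrt n * Real.sqrt n = n := Real.mul_self_sqrt hn0
    have hsn0 : 0 ≤ Real.sqrt n := Real.sqrt_nonneg n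
    have hkey : Real.sqrt n / 3 ≤ n / Real.sqrt r := by
      rw [div_le_div_iff₀ (by norm_num) hsr]
      nlinarith [mul_le_mul_of_nonneg_left h1 hsn0]
    have : (0:ℝ) ≤ n / Real.sqrt r - Real.sqrt n / 3 := by linarith
    positivity
  -- main induction
  have key : ∀ k : ℕ, ∀ n : ℝ, r / 9 ≤ n → n ≤ (6/5 : ℝ) ^ k * r →
      B n ≤ 120 * c * (n / Real.sqrt r - Real.sqrt n / 3) := by
    intro k
    induction k with
    | zero =>
      intro n hn hnk
      norm_num at hnk
      rw [hB0 n hnk]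
      exact hfpos n hn
    | succ k ih =>
      intro n hn hnk
      by_cases hnr : n ≤ r
      · rw [hB0 n hnr]; exact hfpos n hn
      push_neg at hnr
      obtain ⟨α₁, α₂, α₃, h1, h2, h3, hsum, ha, hb, hcc, hrecn⟩ := hrec n hnr
      have hn0 : (0:ℝ) < n := by linarith
      set s := Real.sqrt n with hsdef
      have hs0 : (0:ℝ) ≤ s := Real.sqrt_nonneg n
      have hs2 : s ^ 2 = n := Real.sq_sqrt hn0.le
      have hsrn : Real.sqrt r ≤ s := Real.sqrt_le_sqrt hnr.le
      have hsc' : 6 * c' ≤ s := by linarith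
      have hss : s * s = n := Real.mul_self_sqrt hn0.le
      have hcs : c' * s ≤ n / 6 := by
        have h := mul_le_mul_of_nonneg_right hsc' hs0
        linarith
      have hcs0 : (0:ℝ) ≤ c' * s := mul_nonneg hc'.le hs0
      -- bound (5/6) n ≤ (6/5)^k * r
      have hbound : (5/6 : ℝ) * n ≤ (6/5 : ℝ) ^ k * r := by
        rw [pow_succ] at hnk
        linarith
      -- bounds on the α's
      have h2' : α₂ ≤ 2/3 := by linarith
      have h2'' : (1:ℝ)/6 ≤ α₂ := by linarith
      have h3' : α₃ ≤ 2/3 := by linarith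
      have han : (1/3 : ℝ) * n ≤ α₁ * n := mul_le_mul_of_nonneg_right ha hn0.le
      have hbn : α₁ * n ≤ (2/3 : ℝ) * n := mul_le_mul_of_nonneg_right hb hn0.le
      have ha2n : (1/6 : ℝ) * n ≤ α₂ * n := mul_le_mul_of_nonneg_right h2'' hn0.le
      have hb2n : α₂ * n ≤ (2/3 : ℝ) * n := mul_le_mul_of_nonneg_right h2' hn0.le
      have hb3n : α₃ * n ≤ (2/3 : ℝ) * n := mul_le_mul_of_nonneg_right h3' hn0.le
      have ha3n : (0:ℝ) ≤ α₃ * n := mul_nonneg h3 hn0.le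
      -- apply the induction hypothesis to the first two pieces
      have hB1 : B (α₁ * n + c' * s) ≤
          120 * c * ((α₁ * n + c' * s) / Real.sqrt r - Real.sqrt (α₁ * n + c' * s) / 3) :=
        ih _ (by linarith) (by linarith)
      have hB2 : B (α₂ * n + c' * s) ≤
          120 * c * ((α₂ * n + c' * s) / Real.sqrt r - Real.sqrt (α₂ * n + c' * s) / 3) :=
        ih _ (by linarith) (by linarith)
      -- the third piece: only a linear bound is needed
      have hB3 : B (α₃ * n + c' * s) ≤ 120 * c * ((α₃ * n + c' * s) / Real.sqrt r) := by
        by_cases h3r : α₃ * n + c' * s ≤ r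
        · rw [hB0 _ h3r]
          have : (0:ℝ) ≤ α₃ * n + c' * s := by linarith
          positivity
        · push_neg at h3r
          have := ih (α₃ * n + c' * s) (by linarith) (by linarith)
          linarith [mul_nonneg hc.le (Real.sqrt_nonneg (α₃ * n + c' * s))]
      -- lower bound on the square roots of the first two pieces
      set u := Real.sqrt α₁ with hudef
      set v := Real.sqrt α₂ with hvdef
      have hu0 : (0:ℝ) ≤ u := Real.sqrt_nonneg _
      have hv0 : (0:ℝ) ≤ v := Real.sqrt_nonneg _
      have hu2 : u ^ 2 = α₁ := Real.sq_sqrt h1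
      have hv2 : v ^ 2 = α₂ := Real.sq_sqrt h2
      have hsumuv : (21:ℝ)/20 ≤ u + v := by
        exact weak_r_division_aux_sqrt_sum u v hu0 hv0 (by rw [hu2]; linarith)
          (by rw [hv2]; linarith) (by rw [hu2, hv2]; linarith)
      have hus : u * s ≤ Real.sqrt (α₁ * n + c' * s) := by
        have h := Real.sqrt_le_sqrt (show α₁ * n ≤ α₁ * n + c' * s by linarith)
        rwa [Real.sqrt_mul h1 n] at h
      have hvs : v * s ≤ Real.sqrt (α₂ * n + c' * s) := by
        have h := Real.sqrt_le_sqrt (show α₂ * n ≤ α₂ * n + c' * s by linarith)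
        rwa [Real.sqrt_mul h2 n] at h
      have hroot : (21:ℝ)/20 * s ≤
          Real.sqrt (α₁ * n + c' * s) + Real.sqrt (α₂ * n + c' * s) := by
        have h := mul_le_mul_of_nonneg_right hsumuv hs0
        linarith
      -- sum of the pieces
      have hdiv : (α₁ * n + c' * s) / Real.sqrt r + (α₂ * n + c' * s) / Real.sqrt r
          + (α₃ * n + c' * s) / Real.sqrt r = n / Real.sqrt r + 3 * (c' * s) / Real.sqrt r := by
        rw [← add_div, ← add_div,
          show (α₁ * n + c' * s) + (α₂ * n + c' * s) + (α₃ * n + c' * s) = n + 3 * (c' * s) by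
            linear_combination n * hsum, add_div]
      have hqc : 3 * (c' * s) / Real.sqrt r ≤ s / 120 := by
        rw [div_le_div_iff₀ hsr (by norm_num)]
        have h := mul_le_mul_of_nonneg_right hsrc' hs0
        linarith
      -- put everything together
      have hfinal : s + 120 * ((α₁ * n + c' * s) / Real.sqrt r - Real.sqrt (α₁ * n + c' * s) / 3)
          + 120 * ((α₂ * n + c' * s) / Real.sqrt r - Real.sqrt (α₂ * n + c' * s) / 3)
          + 120 * ((α₃ * n + c' * s) / Real.sqrt r)
          ≤ 120 * (n / Real.sqrt r - s / 3) := by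
        linarith [hdiv, hqc, hroot]
      calc B n ≤ c * s + B (α₁ * n + c' * s) + B (α₂ * n + c' * s) + B (α₃ * n + c' * s) := hrecn
        _ ≤ c * s
            + 120 * c * ((α₁ * n + c' * s) / Real.sqrt r - Real.sqrt (α₁ * n + c' * s) / 3)
            + 120 * c * ((α₂ * n + c' * s) / Real.sqrt r - Real.sqrt (α₂ * n + c' * s) / 3)
            + 120 * c * ((α₃ * n + c' * s) / Real.sqrt r) := by linarith
        _ = c * (s + 120 * ((α₁ * n + c' * s) / Real.sqrt r - Real.sqrt (α₁ * n + c' * s) / 3)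
            + 120 * ((α₂ * n + c' * s) / Real.sqrt r - Real.sqrt (α₂ * n + c' * s) / 3)
            + 120 * ((α₃ * n + c' * s) / Real.sqrt r)) := by ring
        _ ≤ c * (120 * (n / Real.sqrt r - s / 3)) := by
            exact mul_le_mul_of_nonneg_left hfinal hc.le
        _ = 120 * c * (n / Real.sqrt r - s / 3) := by ring
  intro n hn
  obtain ⟨k, hk⟩ := pow_unbounded_of_one_lt (n / r) (show (1:ℝ) < 6/5 by norm_num)
  exact key k n hn (le_of_lt ((div_lt_iff₀ hrpos).mp hk))
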